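/- arXiv:2106.00771 — 3 statements merged into one kernel-verified Lean document; each statement's English description precedes it below -/
import Mathlib

section
/- (Lemma 2, first moment.) In the correlated IRS model with equal phase shifts, the end-to-end channel gain H = |Σ_{i=1}^M h_i g_i|² satisfies E[H] = M + Σ_{(i,k) : i ≠ k} (ρ i k)², where the sum runs over all ordered pairs of distinct indices. -/
open MeasureTheory ProbabilityTheory Complex

/-- A family of real random variables that are mutually independent and each
distributed as a real Gaussian with mean `0` and variance `1/2`. -/
def StdRealGaussians {Ω : Type*} [MeasurableSpace Ω] {ι : Type*}
    (P : Measure Ω) (x : ι → Ω → ℝ) : Prop :=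
  (∀ i, Measurable (x i)) ∧
  iIndepFun x P ∧
  ∀ i, Measure.map (x i) P = gaussianReal 0 (1/2)

section Aux
open Real
open scoped ENNReal NNReal
set_option linter.unusedSectionVars false

lemma gauss_pdf_eq (x : ℝ) : gaussianPDFReal 0 (1/2) x = (Real.sqrt π)⁻¹ * Real.exp (-x^2) := by
  unfold gaussianPDFReal
  norm_num
  rw [mul_comm (√2), mul_assoc, inv_mul_cancel₀ (by positivity : √2 ≠ 0), mul_one]


lemma gauss_integral_eq (f : ℝ → ℝ) :
    ∫ x, f x ∂(gaussianReal 0 (1/2)) = ∫ x, gaussianPDFReal 0 (1/2) x * f x := by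
  rw [gaussianReal_of_var_ne_zero _ (by norm_num)]
  have h1 : (gaussianPDF 0 (1/2)) = (fun x => ((Real.toNNReal (gaussianPDFReal 0 (1/2) x)) : ℝ≥0∞)) := rfl
  rw [h1, integral_withDensity_eq_integral_smul ((measurable_gaussianPDFReal 0 (1/2)).real_toNNReal) f]
  congr 1; ext x
  simp [NNReal.smul_def, Real.coe_toNNReal _ (gaussianPDFReal_nonneg _ _ _)]

lemma gauss_int_Ioi : ∫ x in Set.Ioi (0:ℝ), x^2 * Real.exp (-x^2) = Real.sqrt π / 4 := by
  have h32 : Real.Gamma (3/2) = Real.sqrt π / 2 := by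
    have : Real.Gamma (3/2) = Real.Gamma (1/2 + 1) := by norm_num
    rw [this, Real.Gamma_add_one (by norm_num), Real.Gamma_one_half_eq]; ring
  have hG : Real.Gamma (3/2) = ∫ x in Set.Ioi (0:ℝ), Real.exp (-x) * x ^ ((3:ℝ)/2 - 1) :=
    Real.Gamma_eq_integral (by norm_num)
  rw [← integral_comp_rpow_Ioi_of_pos zero_lt_two] at hG
  have heq : ∀ x ∈ Set.Ioi (0:ℝ),
      (2 * x ^ ((2:ℝ) - 1)) • (Real.exp (-(x ^ (2:ℝ))) * (x ^ (2:ℝ)) ^ ((3:ℝ)/2 - 1))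
        = 2 * (x^2 * Real.exp (-x^2)) := by
    intro x hx
    have hx0 : (0:ℝ) < x := hx
    have h1 : x ^ ((2:ℝ) - 1) = x := by norm_num
    have h2 : x ^ ((2:ℝ):ℝ) = x ^ (2:ℕ) := by
      rw [show ((2:ℝ)) = ((2:ℕ):ℝ) by norm_num, Real.rpow_natCast]
    have h3 : (x ^ ((2:ℝ))) ^ ((3:ℝ)/2 - 1) = x := by
      rw [← Real.rpow_mul hx0.le]
      norm_num
    rw [smul_eq_mul, h1, h3, h2]
    ring
  rw [setIntegral_congr_fun measurableSet_Ioi heq] at hG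
  rw [integral_const_mul] at hG
  rw [h32] at hG
  linarith

lemma gauss_J2 : ∫ x : ℝ, x^2 * Real.exp (-x^2) = Real.sqrt π / 2 := by
  have : ∫ x : ℝ, x^2 * Real.exp (-x^2) = ∫ x : ℝ, (fun t => t^2 * Real.exp (-t^2)) |x| := by
    congr 1; ext x; simp [sq_abs]
  rw [this]
  have h2 : ∫ x : ℝ, (fun t => t^2 * Real.exp (-t^2)) |x| = 2 * ∫ x in Set.Ioi (0:ℝ), x^2 * Real.exp (-x^2) := integral_comp_abs (f := fun t => t^2 * Real.exp (-t^2))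
  rw [h2, gauss_int_Ioi]
  ring

lemma gauss_integrable_sq : Integrable (fun x => x^2) (gaussianReal 0 (1/2)) := by
  rw [gaussianReal_of_var_ne_zero _ (by norm_num)]
  rw [integrable_withDensity_iff (measurable_gaussianPDF 0 (1/2)) (Filter.Eventually.of_forall fun x => ENNReal.ofReal_lt_top)]
  have : ∀ x : ℝ, x ^ 2 * (gaussianPDF 0 (1/2) x).toReal
      = (Real.sqrt π)⁻¹ * (x ^ ((2:ℝ)) * Real.exp (-(1:ℝ) * x^2)) := by
    intro x
    unfold gaussianPDF
    rw [ENNReal.toReal_ofReal (gaussianPDFReal_nonneg _ _ _), gauss_pdf_eq x,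
      show x ^ ((2:ℝ)) = x ^ (2:ℕ) by rw [show ((2:ℝ)) = ((2:ℕ):ℝ) by norm_num, Real.rpow_natCast]]
    ring_nf
  simp only [this]
  exact ((integrable_rpow_mul_exp_neg_mul_sq one_pos (by norm_num : (-1:ℝ) < 2)).const_mul _)

lemma gauss_integrable_id : Integrable (fun x => x) (gaussianReal 0 (1/2)) := by
  have h := gauss_integrable_sq
  have hmp : MemLp (fun x : ℝ => x) 2 (gaussianReal 0 (1/2)) :=
    (memLp_two_iff_integrable_sq aestronglyMeasurable_id).mpr h
  exact hmp.integrable (by norm_num)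

lemma gauss_memLp2 : MemLp (fun x : ℝ => x) 2 (gaussianReal 0 (1/2)) :=
  (memLp_two_iff_integrable_sq aestronglyMeasurable_id).mpr gauss_integrable_sq

lemma gauss_moment_sq : ∫ x, x^2 ∂(gaussianReal 0 (1/2)) = 1/2 := by
  rw [gauss_integral_eq]
  have : ∀ x : ℝ, gaussianPDFReal 0 (1/2) x * x^2 = (Real.sqrt π)⁻¹ * (x^2 * Real.exp (-x^2)) := by
    intro x; rw [gauss_pdf_eq]; ring
  simp only [this]
  rw [integral_const_mul, gauss_J2]
  rw [inv_mul_eq_div, div_div]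
  rw [div_eq_iff (by positivity)]
  ring

lemma gauss_moment_one : ∫ x, x ∂(gaussianReal 0 (1/2)) = 0 := by
  rw [gauss_integral_eq]
  have key : ∫ x : ℝ, gaussianPDFReal 0 (1/2) x * x
      = ∫ x : ℝ, gaussianPDFReal 0 (1/2) (-x) * (-x) := by
    rw [integral_neg_eq_self (fun x => gaussianPDFReal 0 (1/2) x * x) volume]
  have heq : ∀ x : ℝ, gaussianPDFReal 0 (1/2) (-x) * (-x) = -(gaussianPDFReal 0 (1/2) x * x) := by
    intro x; rw [gauss_pdf_eq, gauss_pdf_eq]; ring_nf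
  simp only [heq] at key
  rw [integral_neg] at key
  linarith

section W
variable {Ω : Type*} [MeasurableSpace Ω] {P : Measure Ω} [IsProbabilityMeasure P]
  {ι : Type*} [DecidableEq ι] {W : ι → Ω → ℝ}
set_option linter.unusedSectionVars false

lemma W_memLp2 (hW : StdRealGaussians P W) (a : ι) : MemLp (W a) 2 P := by
  have h := gauss_memLp2
  rw [← hW.2.2 a] at h
  exact (memLp_map_measure_iff aestronglyMeasurable_id (hW.1 a).aemeasurable).mp h

lemma W_integrable (hW : StdRealGaussians P W) (a : ι) : Integrable (W a) P :=
  (W_memLp2 hW a).integrable one_le_two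

lemma W_mean (hW : StdRealGaussians P W) (a : ι) : ∫ ω, W a ω ∂P = 0 := by
  have h := integral_map (φ := W a) (μ := P) (hW.1 a).aemeasurable
    (f := fun x : ℝ => x) aestronglyMeasurable_id
  rw [hW.2.2 a] at h
  rw [← h]
  exact gauss_moment_one

lemma W_sq (hW : StdRealGaussians P W) (a : ι) : ∫ ω, W a ω * W a ω ∂P = 1/2 := by
  have h := integral_map (φ := W a) (μ := P) (hW.1 a).aemeasurable
    (f := fun x : ℝ => x * x) ((measurable_id.mul measurable_id).aestronglyMeasurable)
  rw [hW.2.2 a] at h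
  rw [← h]
  have : ∀ x : ℝ, x * x = x^2 := fun x => (sq x).symm
  simp only [this]
  exact gauss_moment_sq

lemma W_pair (hW : StdRealGaussians P W) (a b : ι) :
    ∫ ω, W a ω * W b ω ∂P = if a = b then 1/2 else 0 := by
  by_cases hab : a = b
  · subst hab; rw [if_pos rfl]; exact W_sq hW a
  · rw [if_neg hab]
    have hind : IndepFun (W a) (W b) P := hW.2.1.indepFun hab
    have := hind.integral_mul_eq_mul_integral (W_integrable hW a).aestronglyMeasurable (W_integrable hW b).aestronglyMeasurable
    have h2 : ∫ ω, W a ω * W b ω ∂P = integral P (W a * W b) := rfl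
    rw [h2, this, W_mean hW a, zero_mul]

lemma memLp2_integrable_mul {f g : Ω → ℝ} (hf : MemLp f 2 P) (hg : MemLp g 2 P) :
    Integrable (fun ω => f ω * g ω) P := by
  have h1 := (hf.add hg).integrable_sq
  have h2 := hf.integrable_sq
  have h3 := hg.integrable_sq
  have h4 := ((h1.sub h2).sub h3).div_const 2
  have heq : (fun ω => f ω * g ω)
      = fun ω => (((f + g) ω ^ 2 - f ω ^ 2) - g ω ^ 2) / 2 := by
    funext ω; simp only [Pi.add_apply]; ring
  rw [heq]
  exact h4

lemma W_pair_int (hW : StdRealGaussians P W) (a b : ι) :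
    Integrable (fun ω => W a ω * W b ω) P :=
  memLp2_integrable_mul (W_memLp2 hW a) (W_memLp2 hW b)

lemma W_quad_indep (hW : StdRealGaussians P W) {a b c d : ι}
    (hac : a ≠ c) (had : a ≠ d) (hbc : b ≠ c) (hbd : b ≠ d) :
    IndepFun (fun ω => W a ω * W b ω) (fun ω => W c ω * W d ω) P :=
  hW.2.1.indepFun_mul_mul hW.1 a b c d hac had hbc hbd

lemma W_quad_int (hW : StdRealGaussians P W) {a b c d : ι}
    (hac : a ≠ c) (had : a ≠ d) (hbc : b ≠ c) (hbd : b ≠ d) :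
    Integrable (fun ω => (W a ω * W b ω) * (W c ω * W d ω)) P :=
  (W_quad_indep hW hac had hbc hbd).integrable_mul (W_pair_int hW a b) (W_pair_int hW c d)

lemma W_quad (hW : StdRealGaussians P W) {a b c d : ι}
    (hac : a ≠ c) (had : a ≠ d) (hbc : b ≠ c) (hbd : b ≠ d) :
    ∫ ω, (W a ω * W b ω) * (W c ω * W d ω) ∂P
      = (if a = b then 1/2 else 0) * (if c = d then 1/2 else 0) := by
  have h := (W_quad_indep hW hac had hbc hbd).integral_mul_eq_mul_integral
    (W_pair_int hW a b).aestronglyMeasurable (W_pair_int hW c d).aestronglyMeasurable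
  have h2 : ∫ ω, (W a ω * W b ω) * (W c ω * W d ω) ∂P
      = integral P ((fun ω => W a ω * W b ω) * (fun ω => W c ω * W d ω)) := rfl
  rw [h2, h, W_pair hW a b, W_pair hW c d]

end W

open Complex in
lemma indepFun_quad_quad {Ω ι : Type*} [MeasurableSpace Ω] [DecidableEq ι] {μ : Measure Ω} {f : ι → Ω → ℝ}
    (h_indep : iIndepFun f μ) (hf : ∀ i, Measurable (f i))
    {a b c d a' b' c' d' : ι}
    (h : ∀ x ∈ ({a, b, c, d} : Finset ι), ∀ y ∈ ({a', b', c', d'} : Finset ι), x ≠ y) :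
    IndepFun (fun ω => (f a ω, f b ω, f c ω, f d ω))
      (fun ω => (f a' ω, f b' ω, f c' ω, f d' ω)) μ := by
  classical
  let g (i j k l : ι) (v : ∀ x : ({i, j, k, l} : Finset ι), ℝ) : ℝ × ℝ × ℝ × ℝ :=
    ⟨v ⟨i, by simp⟩, v ⟨j, by simp⟩, v ⟨k, by simp⟩, v ⟨l, by simp⟩⟩
  have hg (i j k l : ι) : Measurable (g i j k l) := by fun_prop
  exact (h_indep.indepFun_finset {a, b, c, d} {a', b', c', d'}
    (Finset.disjoint_left.mpr fun x hx hy => h x hx x hy rfl) hf).comp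
    (hg a b c d) (hg a' b' c' d')

open Complex Sum in
lemma key4 {Ω : Type*} [MeasurableSpace Ω] {P : Measure Ω} [IsProbabilityMeasure P] {M : ℕ}
    {xh yh xg yg : Fin M → Ω → ℝ}
    (hzz : StdRealGaussians P (Sum.elim (Sum.elim xh yh) (Sum.elim xg yg)))
    (j l m n : Fin M) :
    Integrable (fun ω => ((xh j ω : ℂ) + Complex.I * yh j ω)
        * (starRingEnd ℂ) ((xh l ω : ℂ) + Complex.I * yh l ω)
        * (((xg m ω : ℂ) + Complex.I * yg m ω)
          * (starRingEnd ℂ) ((xg n ω : ℂ) + Complex.I * yg n ω))) P ∧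
    ∫ ω, ((xh j ω : ℂ) + Complex.I * yh j ω)
        * (starRingEnd ℂ) ((xh l ω : ℂ) + Complex.I * yh l ω)
        * (((xg m ω : ℂ) + Complex.I * yg m ω)
          * (starRingEnd ℂ) ((xg n ω : ℂ) + Complex.I * yg n ω)) ∂P
      = (if j = l then 1 else 0) * (if m = n then 1 else 0) := by
  have hW := hzz
  -- pair integrability
  have ixx : Integrable (fun ω => xh j ω * xh l ω) P := W_pair_int hzz (inl (inl j)) (inl (inl l))
  have iyy : Integrable (fun ω => yh j ω * yh l ω) P := W_pair_int hzz (inl (inr j)) (inl (inr l))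
  have iyx : Integrable (fun ω => yh j ω * xh l ω) P := W_pair_int hzz (inl (inr j)) (inl (inl l))
  have ixy : Integrable (fun ω => xh j ω * yh l ω) P := W_pair_int hzz (inl (inl j)) (inl (inr l))
  have ixx' : Integrable (fun ω => xg m ω * xg n ω) P := W_pair_int hzz (inr (inl m)) (inr (inl n))
  have iyy' : Integrable (fun ω => yg m ω * yg n ω) P := W_pair_int hzz (inr (inr m)) (inr (inr n))
  have iyx' : Integrable (fun ω => yg m ω * xg n ω) P := W_pair_int hzz (inr (inr m)) (inr (inl n))
  have ixy' : Integrable (fun ω => xg m ω * yg n ω) P := W_pair_int hzz (inr (inl m)) (inr (inr n))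
  -- pair values
  have vxx : ∫ ω, xh j ω * xh l ω ∂P = if j = l then 1/2 else 0 := by
    simpa using W_pair hzz (inl (inl j)) (inl (inl l))
  have vyy : ∫ ω, yh j ω * yh l ω ∂P = if j = l then 1/2 else 0 := by
    simpa using W_pair hzz (inl (inr j)) (inl (inr l))
  have vyx : ∫ ω, yh j ω * xh l ω ∂P = 0 := by
    simpa using W_pair hzz (inl (inr j)) (inl (inl l))
  have vxy : ∫ ω, xh j ω * yh l ω ∂P = 0 := by
    simpa using W_pair hzz (inl (inl j)) (inl (inr l))
  have vxx' : ∫ ω, xg m ω * xg n ω ∂P = if m = n then 1/2 else 0 := by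
    simpa using W_pair hzz (inr (inl m)) (inr (inl n))
  have vyy' : ∫ ω, yg m ω * yg n ω ∂P = if m = n then 1/2 else 0 := by
    simpa using W_pair hzz (inr (inr m)) (inr (inr n))
  have vyx' : ∫ ω, yg m ω * xg n ω ∂P = 0 := by
    simpa using W_pair hzz (inr (inr m)) (inr (inl n))
  have vxy' : ∫ ω, xg m ω * yg n ω ∂P = 0 := by
    simpa using W_pair hzz (inr (inl m)) (inr (inr n))
  -- u, v integrability and values
  have iu1 : Integrable (fun ω => xh j ω * xh l ω + yh j ω * yh l ω) P := ixx.add iyy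
  have iv1 : Integrable (fun ω => yh j ω * xh l ω - xh j ω * yh l ω) P := iyx.sub ixy
  have iu2 : Integrable (fun ω => xg m ω * xg n ω + yg m ω * yg n ω) P := ixx'.add iyy'
  have iv2 : Integrable (fun ω => yg m ω * xg n ω - xg m ω * yg n ω) P := iyx'.sub ixy'
  have vu1 : ∫ ω, (xh j ω * xh l ω + yh j ω * yh l ω) ∂P = if j = l then 1 else 0 := by
    rw [integral_add ixx iyy, vxx, vyy]
    by_cases hjl : j = l <;> simp [hjl] <;> norm_num
  have vv1 : ∫ ω, (yh j ω * xh l ω - xh j ω * yh l ω) ∂P = 0 := by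
    rw [integral_sub iyx ixy, vyx, vxy, sub_zero]
  have vu2 : ∫ ω, (xg m ω * xg n ω + yg m ω * yg n ω) ∂P = if m = n then 1 else 0 := by
    rw [integral_add ixx' iyy', vxx', vyy']
    by_cases hmn : m = n <;> simp [hmn] <;> norm_num
  have vv2 : ∫ ω, (yg m ω * xg n ω - xg m ω * yg n ω) ∂P = 0 := by
    rw [integral_sub iyx' ixy', vyx', vxy', sub_zero]
  -- independence of tuple blocks
  have htup : IndepFun (fun ω => (xh j ω, yh j ω, xh l ω, yh l ω))
      (fun ω => (xg m ω, yg m ω, xg n ω, yg n ω)) P := by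
    exact indepFun_quad_quad hzz.2.1 hzz.1
      (a := inl (inl j)) (b := inl (inr j)) (c := inl (inl l)) (d := inl (inr l))
      (a' := inr (inl m)) (b' := inr (inr m)) (c' := inr (inl n)) (d' := inr (inr n))
      (by intro x hx y hy
          simp only [Finset.mem_insert, Finset.mem_singleton] at hx hy
          rcases hx with rfl|rfl|rfl|rfl <;> rcases hy with rfl|rfl|rfl|rfl <;> simp)
  have hφu : Measurable (fun p : ℝ × ℝ × ℝ × ℝ => p.1 * p.2.2.1 + p.2.1 * p.2.2.2) := by fun_prop
  have hφv : Measurable (fun p : ℝ × ℝ × ℝ × ℝ => p.2.1 * p.2.2.1 - p.1 * p.2.2.2) := by fun_prop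
  have hIuu : IndepFun (fun ω => xh j ω * xh l ω + yh j ω * yh l ω)
      (fun ω => xg m ω * xg n ω + yg m ω * yg n ω) P := htup.comp hφu hφu
  have hIuv : IndepFun (fun ω => xh j ω * xh l ω + yh j ω * yh l ω)
      (fun ω => yg m ω * xg n ω - xg m ω * yg n ω) P := htup.comp hφu hφv
  have hIvu : IndepFun (fun ω => yh j ω * xh l ω - xh j ω * yh l ω)
      (fun ω => xg m ω * xg n ω + yg m ω * yg n ω) P := htup.comp hφv hφu
  have hIvv : IndepFun (fun ω => yh j ω * xh l ω - xh j ω * yh l ω)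
      (fun ω => yg m ω * xg n ω - xg m ω * yg n ω) P := htup.comp hφv hφv
  -- products
  have iuu : Integrable (fun ω => (xh j ω * xh l ω + yh j ω * yh l ω)
      * (xg m ω * xg n ω + yg m ω * yg n ω)) P := hIuu.integrable_mul iu1 iu2
  have iuv : Integrable (fun ω => (xh j ω * xh l ω + yh j ω * yh l ω)
      * (yg m ω * xg n ω - xg m ω * yg n ω)) P := hIuv.integrable_mul iu1 iv2
  have ivu : Integrable (fun ω => (yh j ω * xh l ω - xh j ω * yh l ω)
      * (xg m ω * xg n ω + yg m ω * yg n ω)) P := hIvu.integrable_mul iv1 iu2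
  have ivv : Integrable (fun ω => (yh j ω * xh l ω - xh j ω * yh l ω)
      * (yg m ω * xg n ω - xg m ω * yg n ω)) P := hIvv.integrable_mul iv1 iv2
  have vuu : ∫ ω, (xh j ω * xh l ω + yh j ω * yh l ω)
      * (xg m ω * xg n ω + yg m ω * yg n ω) ∂P
      = (if j = l then (1:ℝ) else 0) * (if m = n then 1 else 0) := by
    have h := hIuu.integral_mul_eq_mul_integral iu1.aestronglyMeasurable iu2.aestronglyMeasurable
    rw [vu1, vu2] at h
    exact h
  have vuv : ∫ ω, (xh j ω * xh l ω + yh j ω * yh l ω)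
      * (yg m ω * xg n ω - xg m ω * yg n ω) ∂P = 0 := by
    have h := hIuv.integral_mul_eq_mul_integral iu1.aestronglyMeasurable iv2.aestronglyMeasurable
    rw [vv2, mul_zero] at h
    exact h
  have vvu : ∫ ω, (yh j ω * xh l ω - xh j ω * yh l ω)
      * (xg m ω * xg n ω + yg m ω * yg n ω) ∂P = 0 := by
    have h := hIvu.integral_mul_eq_mul_integral iv1.aestronglyMeasurable iu2.aestronglyMeasurable
    rw [vv1, zero_mul] at h
    exact h
  have vvv : ∫ ω, (yh j ω * xh l ω - xh j ω * yh l ω)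
      * (yg m ω * xg n ω - xg m ω * yg n ω) ∂P = 0 := by
    have h := hIvv.integral_mul_eq_mul_integral iv1.aestronglyMeasurable iv2.aestronglyMeasurable
    rw [vv1, zero_mul] at h
    exact h
  -- F and G
  have iF : Integrable (fun ω => (xh j ω * xh l ω + yh j ω * yh l ω)
      * (xg m ω * xg n ω + yg m ω * yg n ω)
      - (yh j ω * xh l ω - xh j ω * yh l ω)
      * (yg m ω * xg n ω - xg m ω * yg n ω)) P := iuu.sub ivv
  have iG : Integrable (fun ω => (xh j ω * xh l ω + yh j ω * yh l ω)
      * (yg m ω * xg n ω - xg m ω * yg n ω)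
      + (yh j ω * xh l ω - xh j ω * yh l ω)
      * (xg m ω * xg n ω + yg m ω * yg n ω)) P := iuv.add ivu
  have vF : ∫ ω, ((xh j ω * xh l ω + yh j ω * yh l ω)
      * (xg m ω * xg n ω + yg m ω * yg n ω)
      - (yh j ω * xh l ω - xh j ω * yh l ω)
      * (yg m ω * xg n ω - xg m ω * yg n ω)) ∂P
      = (if j = l then (1:ℝ) else 0) * (if m = n then 1 else 0) := by
    rw [integral_sub iuu ivv, vuu, vvv, sub_zero]
  have vG : ∫ ω, ((xh j ω * xh l ω + yh j ω * yh l ω)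
      * (yg m ω * xg n ω - xg m ω * yg n ω)
      + (yh j ω * xh l ω - xh j ω * yh l ω)
      * (xg m ω * xg n ω + yg m ω * yg n ω)) ∂P = 0 := by
    rw [integral_add iuv ivu, vuv, vvu, add_zero]
  -- pointwise identity
  have hpt : (fun ω => ((xh j ω : ℂ) + Complex.I * yh j ω)
        * (starRingEnd ℂ) ((xh l ω : ℂ) + Complex.I * yh l ω)
        * (((xg m ω : ℂ) + Complex.I * yg m ω)
          * (starRingEnd ℂ) ((xg n ω : ℂ) + Complex.I * yg n ω)))
      = (fun ω => (((xh j ω * xh l ω + yh j ω * yh l ω)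
      * (xg m ω * xg n ω + yg m ω * yg n ω)
      - (yh j ω * xh l ω - xh j ω * yh l ω)
      * (yg m ω * xg n ω - xg m ω * yg n ω) : ℝ) : ℂ)
      + Complex.I * (((xh j ω * xh l ω + yh j ω * yh l ω)
      * (yg m ω * xg n ω - xg m ω * yg n ω)
      + (yh j ω * xh l ω - xh j ω * yh l ω)
      * (xg m ω * xg n ω + yg m ω * yg n ω) : ℝ) : ℂ)) := by
    funext ω
    simp only [map_add, map_mul, conj_ofReal, conj_I]
    apply Complex.ext <;>
      simp [Complex.add_re, Complex.add_im, Complex.mul_re, Complex.mul_im] <;> ring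
  have iF' : Integrable (fun ω => (((xh j ω * xh l ω + yh j ω * yh l ω)
      * (xg m ω * xg n ω + yg m ω * yg n ω)
      - (yh j ω * xh l ω - xh j ω * yh l ω)
      * (yg m ω * xg n ω - xg m ω * yg n ω) : ℝ) : ℂ)) P := iF.ofReal
  have iG' : Integrable (fun ω => Complex.I * (((xh j ω * xh l ω + yh j ω * yh l ω)
      * (yg m ω * xg n ω - xg m ω * yg n ω)
      + (yh j ω * xh l ω - xh j ω * yh l ω)
      * (xg m ω * xg n ω + yg m ω * yg n ω) : ℝ) : ℂ)) P := iG.ofReal.const_mul Complex.I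
  constructor
  · rw [hpt]
    exact iF'.add iG'
  · have hOR : ∀ (f : Ω → ℝ), ∫ ω, ((f ω : ℝ) : ℂ) ∂P = ((∫ ω, f ω ∂P : ℝ) : ℂ) :=
      fun f => integral_ofReal
    rw [hpt, integral_add iF' iG', integral_const_mul, hOR, hOR, vF, vG]
    by_cases hjl : j = l <;> by_cases hmn : m = n <;> simp [hjl, hmn]


lemma sum_expand {γ : Type*} [Fintype γ] {R : Type*} [CommRing R] (a b c d : γ → R) :
    (∑ j, a j) * (∑ m, b m) * ((∑ l, c l) * (∑ n, d n))
      = ∑ q : (γ × γ) × (γ × γ), (a q.2.1 * c q.2.2) * (b q.1.1 * d q.1.2) := by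
  have h1 : (∑ j, a j) * (∑ l, c l) = ∑ j, ∑ l, a j * c l := Finset.sum_mul_sum _ _ _ _
  have h2 : (∑ m, b m) * (∑ n, d n) = ∑ m, ∑ n, b m * d n := Finset.sum_mul_sum _ _ _ _
  calc (∑ j, a j) * (∑ m, b m) * ((∑ l, c l) * (∑ n, d n))
      = ((∑ j, a j) * (∑ l, c l)) * ((∑ m, b m) * (∑ n, d n)) := by ring
    _ = (∑ j, ∑ l, a j * c l) * (∑ m, ∑ n, b m * d n) := by rw [h1, h2]
    _ = ∑ q : (γ × γ) × (γ × γ), (a q.2.1 * c q.2.2) * (b q.1.1 * d q.1.2) := by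
        simp only [Finset.sum_mul, Finset.mul_sum, Fintype.sum_prod_type]

lemma sum_prod_mul {γ δ : Type*} [Fintype γ] [Fintype δ] {R : Type*} [CommRing R]
    (f : γ → R) (g : δ → R) :
    ∑ q : γ × δ, f q.1 * g q.2 = (∑ p, f p) * (∑ p, g p) := by
  rw [Finset.sum_mul_sum]
  simp only [Fintype.sum_prod_type]


end Aux

theorem stmt5 {Ω : Type*} [MeasurableSpace Ω] (P : Measure Ω) [IsProbabilityMeasure P]
    {M : ℕ}
    (ρ : Fin M → Fin M → ℝ)
    (hsymm : ∀ i k, ρ i k = ρ k i) (hdiag : ∀ i, ρ i i = 1)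
    (hbnd : ∀ i k, 0 ≤ ρ i k ∧ ρ i k ≤ 1)
    (A B : Matrix (Fin M) (Fin M) ℂ)
    (hA : ∀ i k, (A * A.conjTranspose) i k = (ρ i k : ℂ))
    (hB : ∀ i k, (B * B.conjTranspose) i k = (ρ i k : ℂ))
    (xh yh xg yg : Fin M → Ω → ℝ)
    -- the underlying `4M` real Gaussians are mutually independent
    (hzz : StdRealGaussians P (Sum.elim (Sum.elim xh yh) (Sum.elim xg yg)))
    -- the correlated channel vectors
    (h g : Fin M → Ω → ℂ)
    (hh : ∀ i ω, h i ω = ∑ j, A i j * (xh j ω + Complex.I * yh j ω))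
    (hg : ∀ i ω, g i ω = ∑ j, B i j * (xg j ω + Complex.I * yg j ω))
    -- the end-to-end channel gain under equal phase shifts
    (H : Ω → ℝ)
    (hH : ∀ ω, H ω = ‖∑ i, h i ω * g i ω‖ ^ 2) :
    ∫ ω, H ω ∂P =
      M + ∑ p ∈ Finset.univ.filter (fun p : Fin M × Fin M => p.1 ≠ p.2),
        (ρ p.1 p.2) ^ 2 := by
  classical
  -- expansion of each (i,k) term into atoms
  have expand : ∀ i k : Fin M, (fun ω => h i ω * g i ω * (starRingEnd ℂ) (h k ω * g k ω))
      = fun ω => ∑ q : (Fin M × Fin M) × (Fin M × Fin M),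
          ((A i q.2.1 * (starRingEnd ℂ) (A k q.2.2)) * (B i q.1.1 * (starRingEnd ℂ) (B k q.1.2)))
          * (((xh q.2.1 ω : ℂ) + Complex.I * yh q.2.1 ω)
              * (starRingEnd ℂ) ((xh q.2.2 ω : ℂ) + Complex.I * yh q.2.2 ω)
            * (((xg q.1.1 ω : ℂ) + Complex.I * yg q.1.1 ω)
              * (starRingEnd ℂ) ((xg q.1.2 ω : ℂ) + Complex.I * yg q.1.2 ω))) := by
    intro i k
    funext ω
    rw [hh, hg, hh, hg, map_mul, map_sum, map_sum]
    simp only [map_mul]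
    rw [sum_expand (fun j => A i j * ((xh j ω : ℂ) + Complex.I * yh j ω))
      (fun m => B i m * ((xg m ω : ℂ) + Complex.I * yg m ω))
      (fun l => (starRingEnd ℂ) (A k l) * (starRingEnd ℂ) ((xh l ω : ℂ) + Complex.I * yh l ω))
      (fun n => (starRingEnd ℂ) (B k n) * (starRingEnd ℂ) ((xg n ω : ℂ) + Complex.I * yg n ω))]
    refine Finset.sum_congr rfl fun q _ => by ring
  -- integrability of each (i,k) term
  have tInt : ∀ i k : Fin M,
      Integrable (fun ω => h i ω * g i ω * (starRingEnd ℂ) (h k ω * g k ω)) P := by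
    intro i k
    rw [expand i k]
    exact integrable_finset_sum _ fun q _ =>
      ((key4 hzz q.2.1 q.2.2 q.1.1 q.1.2).1.const_mul _)
  -- value of each (i,k) term
  have tVal : ∀ i k : Fin M,
      ∫ ω, h i ω * g i ω * (starRingEnd ℂ) (h k ω * g k ω) ∂P
        = ((ρ i k : ℝ) : ℂ) * ((ρ i k : ℝ) : ℂ) := by
    intro i k
    rw [expand i k,
      integral_finset_sum _ (fun q _ => ((key4 hzz q.2.1 q.2.2 q.1.1 q.1.2).1.const_mul _))]
    have step1 : ∀ q : (Fin M × Fin M) × (Fin M × Fin M),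
        (∫ ω, ((A i q.2.1 * (starRingEnd ℂ) (A k q.2.2)) * (B i q.1.1 * (starRingEnd ℂ) (B k q.1.2)))
          * (((xh q.2.1 ω : ℂ) + Complex.I * yh q.2.1 ω)
              * (starRingEnd ℂ) ((xh q.2.2 ω : ℂ) + Complex.I * yh q.2.2 ω)
            * (((xg q.1.1 ω : ℂ) + Complex.I * yg q.1.1 ω)
              * (starRingEnd ℂ) ((xg q.1.2 ω : ℂ) + Complex.I * yg q.1.2 ω))) ∂P)
        = ((B i q.1.1 * (starRingEnd ℂ) (B k q.1.2)) * (if q.1.1 = q.1.2 then 1 else 0))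
          * ((A i q.2.1 * (starRingEnd ℂ) (A k q.2.2)) * (if q.2.1 = q.2.2 then 1 else 0)) := by
      intro q
      rw [integral_const_mul, (key4 hzz q.2.1 q.2.2 q.1.1 q.1.2).2]
      ring
    rw [Finset.sum_congr rfl fun q _ => step1 q]
    rw [sum_prod_mul (fun p : Fin M × Fin M => (B i p.1 * (starRingEnd ℂ) (B k p.2)) * (if p.1 = p.2 then 1 else 0))
      (fun p : Fin M × Fin M => (A i p.1 * (starRingEnd ℂ) (A k p.2)) * (if p.1 = p.2 then 1 else 0))]
    have hBval : (∑ p : Fin M × Fin M,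
        (B i p.1 * (starRingEnd ℂ) (B k p.2)) * (if p.1 = p.2 then 1 else 0)) = ((ρ i k : ℝ) : ℂ) := by
      rw [Fintype.sum_prod_type]
      simp only [mul_ite, mul_one, mul_zero, Finset.sum_ite_eq, Finset.mem_univ, if_true]
      have := hB i k
      rw [Matrix.mul_apply] at this
      simpa [Matrix.conjTranspose_apply] using this
    have hAval : (∑ p : Fin M × Fin M,
        (A i p.1 * (starRingEnd ℂ) (A k p.2)) * (if p.1 = p.2 then 1 else 0)) = ((ρ i k : ℝ) : ℂ) := by
      rw [Fintype.sum_prod_type]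
      simp only [mul_ite, mul_one, mul_zero, Finset.sum_ite_eq, Finset.mem_univ, if_true]
      have := hA i k
      rw [Matrix.mul_apply] at this
      simpa [Matrix.conjTranspose_apply] using this
    rw [hBval, hAval]
  -- pointwise identity for H
  have hSand : (fun ω => ((H ω : ℝ) : ℂ))
      = fun ω => ∑ i, ∑ k, h i ω * g i ω * (starRingEnd ℂ) (h k ω * g k ω) := by
    funext ω
    rw [hH ω, Complex.sq_norm, ← Complex.mul_conj, map_sum, Finset.sum_mul_sum]
  -- putting it together
  have main : ((∫ ω, H ω ∂P : ℝ) : ℂ)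
      = ∑ i, ∑ k, ((ρ i k : ℝ) : ℂ) * ((ρ i k : ℝ) : ℂ) := by
    have hOR : ∀ f : Ω → ℝ, ∫ ω, ((f ω : ℝ) : ℂ) ∂P = ((∫ ω, f ω ∂P : ℝ) : ℂ) :=
      fun f => integral_ofReal
    rw [← hOR H, show (fun ω => ((H ω : ℝ) : ℂ)) = _ from hSand]
    rw [integral_finset_sum _ (fun i _ => integrable_finset_sum _ (fun k _ => tInt i k))]
    refine Finset.sum_congr rfl fun i _ => ?_
    rw [integral_finset_sum _ (fun k _ => tInt i k)]
    exact Finset.sum_congr rfl fun k _ => tVal i k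
  -- the real arithmetic
  have hreal : ∑ i, ∑ k, ρ i k * ρ i k
      = (M : ℝ) + ∑ p ∈ Finset.univ.filter (fun p : Fin M × Fin M => p.1 ≠ p.2),
          (ρ p.1 p.2) ^ 2 := by
    have htot : ∑ p : Fin M × Fin M, (ρ p.1 p.2) ^ 2 = ∑ i, ∑ k, ρ i k * ρ i k := by
      rw [Fintype.sum_prod_type]
      exact Finset.sum_congr rfl fun i _ => Finset.sum_congr rfl fun k _ => by ring
    have hsplit := Finset.sum_filter_add_sum_filter_not (Finset.univ : Finset (Fin M × Fin M))
      (fun p => p.1 ≠ p.2) (fun p => (ρ p.1 p.2) ^ 2)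
    have hdiagsum : ∑ p ∈ Finset.univ.filter (fun p : Fin M × Fin M => ¬ p.1 ≠ p.2),
        (ρ p.1 p.2) ^ 2 = (M : ℝ) := by
      simp only [not_not]
      rw [Finset.sum_filter, Fintype.sum_prod_type]
      simp [Finset.sum_ite_eq, hdiag]
    rw [← htot, ← hsplit, hdiagsum]
    ring
  have : ((∫ ω, H ω ∂P : ℝ) : ℂ)
      = (((M : ℝ) + ∑ p ∈ Finset.univ.filter (fun p : Fin M × Fin M => p.1 ≠ p.2),
          (ρ p.1 p.2) ^ 2 : ℝ) : ℂ) := by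
    rw [main, ← hreal]
    push_cast
    rfl
  exact_mod_cast this
end

section
/- (Optimal phase configuration, no correlation, fourth moment.) Let h_1,…,h_M, g_1,…,g_M be 2M mutually independent standard circularly-symmetric complex Gaussians, i.e. h_i = x_i + I·y_i and g_i = u_i + I·v_i where all 4M real random variables x_i, y_i, u_i, v_i are mutually independent real Gaussians with mean 0 and variance 1/2. Then E[(Σ_{i=1}^M |h_i|·|g_i|)⁴] = 4M + 6·C(M,2)·(3π²/16 + 1) + 9·C(M,3)·π²/4 + 3·C(M,4)·π⁴/32, where C(M,j) denotes the binomial coefficient 'M choose j'. -/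
open MeasureTheory ProbabilityTheory Complex

section Aux
open Real
open scoped NNReal ENNReal

lemma r2_integrable (k : ℕ) :
    Integrable (fun p : ℝ × ℝ => Real.sqrt (p.1^2 + p.2^2) ^ k * Real.exp (-(p.1^2 + p.2^2)))
      (volume : Measure (ℝ × ℝ)) := by
  rw [Measure.volume_eq_prod]
  have hg : Integrable (fun p : ℝ × ℝ =>
      (Nat.factorial k * Real.exp (1/2)) * (Real.exp (-(1/2) * p.1^2) * Real.exp (-(1/2) * p.2^2)))
      ((volume : Measure ℝ).prod volume) := by
    exact (((integrable_exp_neg_mul_sq (by norm_num : (0:ℝ) < 1/2)).mul_prod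
      (integrable_exp_neg_mul_sq (by norm_num : (0:ℝ) < 1/2)))).const_mul _
  have h0 : Measurable fun p : ℝ × ℝ => p.1^2 + p.2^2 :=
    (measurable_fst.pow_const 2).add (measurable_snd.pow_const 2)
  have hm : Measurable fun p : ℝ × ℝ =>
      Real.sqrt (p.1^2 + p.2^2) ^ k * Real.exp (-(p.1^2 + p.2^2)) :=
    (h0.sqrt.pow_const k).mul h0.neg.exp
  refine hg.mono' hm.aestronglyMeasurable ?_
  filter_upwards with p
  set r := Real.sqrt (p.1^2 + p.2^2) with hr
  have hrn : 0 ≤ r := Real.sqrt_nonneg _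
  have hr2 : r^2 = p.1^2 + p.2^2 := Real.sq_sqrt (by positivity)
  have h1 : r ^ k ≤ Nat.factorial k * Real.exp r := by
    have := Real.pow_div_factorial_le_exp (x := r) hrn k
    have hk : (0:ℝ) < Nat.factorial k := by positivity
    calc r ^ k = Nat.factorial k * (r ^ k / Nat.factorial k) := by field_simp
    _ ≤ Nat.factorial k * Real.exp r := by
        exact mul_le_mul_of_nonneg_left this hk.le
  have h2 : Real.exp r * Real.exp (-(r^2)) ≤ Real.exp (1/2) * Real.exp (-(1/2) * r^2) := by
    rw [← Real.exp_add, ← Real.exp_add]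
    apply Real.exp_le_exp.2
    nlinarith [sq_nonneg (r - 1)]
  have hnorm : ‖r ^ k * Real.exp (-(p.1^2 + p.2^2))‖ = r ^ k * Real.exp (-(r^2)) := by
    rw [hr2]
    exact abs_of_nonneg (by positivity)
  rw [hnorm]
  calc r ^ k * Real.exp (-(r^2)) ≤ (Nat.factorial k * Real.exp r) * Real.exp (-(r^2)) := by
        apply mul_le_mul_of_nonneg_right h1 (Real.exp_nonneg _)
  _ = Nat.factorial k * (Real.exp r * Real.exp (-(r^2))) := by ring
  _ ≤ Nat.factorial k * (Real.exp (1/2) * Real.exp (-(1/2) * r^2)) := by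
        apply mul_le_mul_of_nonneg_left h2 (by positivity)
  _ = Nat.factorial k * Real.exp (1/2) * (Real.exp (-(1/2) * p.1^2) * Real.exp (-(1/2) * p.2^2)) := by
        rw [hr2, show -(1/2) * (p.1^2+p.2^2) = (-(1/2)*p.1^2) + (-(1/2)*p.2^2) by ring, Real.exp_add]
        ring

lemma r2_value (k : ℕ) :
    ∫ p : ℝ × ℝ, Real.sqrt (p.1^2 + p.2^2) ^ k * Real.exp (-(p.1^2 + p.2^2))
      = Real.pi * Real.Gamma ((k + 2) / 2) := by
  have he : ∀ z : ℂ, Real.sqrt (z.re^2 + z.im^2) ^ k * Real.exp (-(z.re^2 + z.im^2))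
      = ‖z‖ ^ ((k : ℝ)) * Real.exp (-1 * ‖z‖ ^ (2:ℝ)) := by
    intro z
    have h1 : ‖z‖ = Real.sqrt (z.re^2 + z.im^2) := by
      rw [Complex.norm_def, Complex.normSq_apply]; ring_nf
    have h2 : ‖z‖ ^ (2:ℝ) = z.re^2 + z.im^2 := by
      rw [Real.rpow_two, h1, Real.sq_sqrt (by positivity)]
    rw [h2, h1, ← Real.rpow_natCast (Real.sqrt _) k]
    ring_nf
  have hmp := Complex.volume_preserving_equiv_real_prod
  have := hmp.integral_comp Complex.measurableEquivRealProd.measurableEmbedding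
    (fun p : ℝ × ℝ => Real.sqrt (p.1^2 + p.2^2) ^ k * Real.exp (-(p.1^2 + p.2^2)))
  rw [← this]
  simp only [Complex.measurableEquivRealProd_apply]
  calc ∫ z : ℂ, Real.sqrt (z.re^2 + z.im^2) ^ k * Real.exp (-(z.re^2 + z.im^2))
      = ∫ z : ℂ, ‖z‖ ^ ((k:ℝ)) * Real.exp (-1 * ‖z‖ ^ (2:ℝ)) := by
        congr 1; funext z; exact he z
    _ = (2 * Real.pi / 2) * (1:ℝ) ^ (-((k:ℝ) + 2) / 2) * Real.Gamma (((k:ℝ) + 2) / 2) := by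
        have hq : (-2:ℝ) < (k:ℝ) := by
          have : (0:ℝ) ≤ k := Nat.cast_nonneg k
          linarith
        exact Complex.integral_rpow_mul_exp_neg_mul_rpow (by norm_num) hq (by norm_num)
    _ = Real.pi * Real.Gamma ((k + 2) / 2) := by
        rw [Real.one_rpow]; ring

lemma rayleigh {Ω : Type*} [MeasurableSpace Ω] {P : Measure Ω} [IsProbabilityMeasure P]
    {a b : Ω → ℝ} (ha : Measurable a) (hb : Measurable b)
    (hi : IndepFun a b P) (hma : Measure.map a P = gaussianReal 0 (1/2))
    (hmb : Measure.map b P = gaussianReal 0 (1/2)) (k : ℕ) :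
    Integrable (fun ω => Real.sqrt (a ω^2 + b ω^2) ^ k) P ∧
    ∫ ω, Real.sqrt (a ω^2 + b ω^2) ^ k ∂P = Real.Gamma ((k + 2) / 2) := by
  set w : ℝ → ℝ≥0 := fun t => (gaussianPDFReal 0 (1/2) t).toNNReal with hw
  have hwmeas : Measurable w := measurable_real_toNNReal.comp (measurable_gaussianPDFReal 0 (1/2))
  have hwco : ∀ t, (w t : ℝ) = (Real.sqrt Real.pi)⁻¹ * Real.exp (-(t^2)) := by
    intro t
    rw [hw]
    rw [Real.coe_toNNReal _ (gaussianPDFReal_nonneg 0 (1/2) t)]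
    simp only [gaussianPDFReal]
    norm_num
    rw [mul_comm]
    field_simp
  have hμ : gaussianReal 0 (1/2) = volume.withDensity (fun t => (w t : ℝ≥0∞)) := by
    rw [gaussianReal_of_var_ne_zero _ (by norm_num : (1/2 : ℝ≥0) ≠ 0)]
    congr 1
  set W : ℝ × ℝ → ℝ≥0 := fun p => w p.1 * w p.2 with hW
  have hWmeas : Measurable W := (hwmeas.comp measurable_fst).mul (hwmeas.comp measurable_snd)
  have hprod : (gaussianReal 0 (1/2)).prod (gaussianReal 0 (1/2))
      = (volume : Measure (ℝ × ℝ)).withDensity (fun p => (W p : ℝ≥0∞)) := by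
    rw [hμ]
    refine Measure.prod_eq fun s t hs ht => ?_
    rw [withDensity_apply _ (hs.prod ht), Measure.volume_eq_prod, ← Measure.prod_restrict,
      withDensity_apply _ hs, withDensity_apply _ ht]
    simp only [hW, ENNReal.coe_mul]
    exact lintegral_prod_mul hwmeas.coe_nnreal_ennreal.aemeasurable
      hwmeas.coe_nnreal_ennreal.aemeasurable
  -- pushforward of the pair
  set T : Ω → ℝ × ℝ := fun ω => (a ω, b ω) with hT
  have hTmeas : Measurable T := ha.prodMk hb
  have hmapT : Measure.map T P = (volume : Measure (ℝ × ℝ)).withDensity (fun p => (W p : ℝ≥0∞)) := by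
    have h0 := (indepFun_iff_map_prod_eq_prod_map_map ha.aemeasurable hb.aemeasurable).1 hi
    rw [hma, hmb, hprod] at h0
    exact h0
  set F : ℝ × ℝ → ℝ := fun p => Real.sqrt (p.1^2 + p.2^2) ^ k with hF
  have hFmeas : Measurable F :=
    (((measurable_fst.pow_const 2).add (measurable_snd.pow_const 2)).sqrt.pow_const k)
  have hsmul : (fun p : ℝ × ℝ => W p • F p)
      = fun p : ℝ × ℝ => Real.pi⁻¹ *
        (Real.sqrt (p.1^2 + p.2^2) ^ k * Real.exp (-(p.1^2 + p.2^2))) := by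
    funext p
    have hWr : (W p : ℝ) = Real.pi⁻¹ * Real.exp (-(p.1^2 + p.2^2)) := by
      rw [hW]
      push_cast
      rw [hwco p.1, hwco p.2]
      have hss : (Real.sqrt Real.pi)⁻¹ * (Real.sqrt Real.pi)⁻¹ = Real.pi⁻¹ := by
        rw [← mul_inv, Real.mul_self_sqrt Real.pi_nonneg]
      rw [show -(p.1^2 + p.2^2) = -p.1^2 + -p.2^2 by ring, Real.exp_add, ← hss]
      ring
    rw [NNReal.smul_def, smul_eq_mul, hWr, hF]
    ring
  have hInt : Integrable (fun p : ℝ × ℝ => W p • F p) volume := by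
    rw [hsmul]
    exact (r2_integrable k).const_mul _
  have hcomp : (fun ω => Real.sqrt (a ω^2 + b ω^2) ^ k) = F ∘ T := rfl
  constructor
  · rw [hcomp]
    rw [← integrable_map_measure hFmeas.aestronglyMeasurable hTmeas.aemeasurable, hmapT]
    exact (integrable_withDensity_iff_integrable_smul hWmeas).2 hInt
  · have h1 : ∫ ω, Real.sqrt (a ω^2 + b ω^2) ^ k ∂P = ∫ p, F p ∂(Measure.map T P) := by
      rw [integral_map hTmeas.aemeasurable hFmeas.aestronglyMeasurable]
    rw [h1, hmapT, integral_withDensity_eq_integral_smul hWmeas F, hsmul,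
      integral_const_mul, r2_value k, ← mul_assoc, inv_mul_cancel₀ Real.pi_ne_zero, one_mul]

lemma abs_helper (c d : ℝ) : ‖(c + Complex.I * d : ℂ)‖ = Real.sqrt (c^2 + d^2) := by
  rw [Complex.norm_def, Complex.normSq_apply]
  congr 1
  simp [Complex.add_re, Complex.add_im, Complex.mul_re, Complex.mul_im]
  ring

lemma desc_choose (M : ℕ) : ((M.choose 2 : ℕ) : ℝ) * 2 = M * (M - 1) ∧
    ((M.choose 3 : ℕ) : ℝ) * 6 = M * (M - 1) * (M - 2) ∧
    ((M.choose 4 : ℕ) : ℝ) * 24 = M * (M - 1) * (M - 2) * (M - 3) := by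
  induction M with
  | zero => norm_num
  | succ n ih =>
    obtain ⟨ih2, ih3, ih4⟩ := ih
    refine ⟨?_, ?_, ?_⟩ <;>
      push_cast [Nat.choose_succ_succ, Nat.choose_one_right] <;>
      push_cast at ih2 ih3 ih4
    · linear_combination ih2
    · linear_combination 3 * ih2 + ih3
    · linear_combination 4 * ih3 + ih4

lemma gamma32 : Real.Gamma (3/2) = Real.sqrt Real.pi / 2 := by
  rw [show (3/2 : ℝ) = 1/2 + 1 by norm_num, Real.Gamma_add_one (by norm_num),
    Real.Gamma_one_half_eq]
  ring

lemma gamma52 : Real.Gamma (5/2) = 3 * Real.sqrt Real.pi / 4 := by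
  rw [show (5/2 : ℝ) = 3/2 + 1 by norm_num, Real.Gamma_add_one (by norm_num), gamma32]
  ring

lemma gamma3 : Real.Gamma 3 = 2 := by
  rw [show (3 : ℝ) = 2 + 1 by norm_num, Real.Gamma_add_one (by norm_num), Real.Gamma_two]
  ring

end Aux

open Real in
theorem stmt12 {Ω : Type*} [MeasurableSpace Ω] (P : Measure Ω) [IsProbabilityMeasure P]
    {M : ℕ} (x y u v : Fin M → Ω → ℝ)
    (hall : StdRealGaussians P (Sum.elim (Sum.elim x y) (Sum.elim u v)))
    (h g : Fin M → Ω → ℂ)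
    (hhdef : ∀ i ω, h i ω = x i ω + Complex.I * y i ω)
    (hgdef : ∀ i ω, g i ω = u i ω + Complex.I * v i ω) :
    ∫ ω, (∑ i, ‖h i ω‖ * ‖g i ω‖) ^ 4 ∂P
      = 4 * M + 6 * (M.choose 2 : ℝ) * (3 * Real.pi ^ 2 / 16 + 1)
        + 9 * (M.choose 3 : ℝ) * Real.pi ^ 2 / 4
        + 3 * (M.choose 4 : ℝ) * Real.pi ^ 4 / 32 := by
  classical
  obtain ⟨hfmeas, hindep, hfmap⟩ := hall
  set f : (Fin M ⊕ Fin M) ⊕ (Fin M ⊕ Fin M) → Ω → ℝ :=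
    Sum.elim (Sum.elim x y) (Sum.elim u v) with hf
  -- the end-to-end gains
  set a : Fin M → Ω → ℝ := fun i ω =>
    Real.sqrt (x i ω ^ 2 + y i ω ^ 2) * Real.sqrt (u i ω ^ 2 + v i ω ^ 2) with haa
  have hxm : ∀ i, Measurable (x i) := fun i => hfmeas (.inl (.inl i))
  have hym : ∀ i, Measurable (y i) := fun i => hfmeas (.inl (.inr i))
  have hum : ∀ i, Measurable (u i) := fun i => hfmeas (.inr (.inl i))
  have hvm : ∀ i, Measurable (v i) := fun i => hfmeas (.inr (.inr i))
  have ham : ∀ i, Measurable (a i) := fun i =>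
    ((((hxm i).pow_const 2).add ((hym i).pow_const 2)).sqrt).mul
      ((((hum i).pow_const 2).add ((hvm i).pow_const 2)).sqrt)
  -- moments of a i
  have mom : ∀ (i : Fin M) (k : ℕ), Integrable (fun ω => a i ω ^ k) P ∧
      ∫ ω, a i ω ^ k ∂P = Real.Gamma (((k : ℝ) + 2) / 2) ^ 2 := by
    intro i k
    have hxy := rayleigh (hxm i) (hym i)
      (hindep.indepFun (show (Sum.inl (Sum.inl i) : (Fin M ⊕ Fin M) ⊕ (Fin M ⊕ Fin M)) ≠
        Sum.inl (Sum.inr i) by simp)) (hfmap (Sum.inl (Sum.inl i))) (hfmap (Sum.inl (Sum.inr i))) k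
    have huv := rayleigh (hum i) (hvm i)
      (hindep.indepFun (show (Sum.inr (Sum.inl i) : (Fin M ⊕ Fin M) ⊕ (Fin M ⊕ Fin M)) ≠
        Sum.inr (Sum.inr i) by simp)) (hfmap (Sum.inr (Sum.inl i))) (hfmap (Sum.inr (Sum.inr i))) k
    -- independence of the two Rayleigh factors raised to powers
    have hpair : IndepFun (fun ω => (x i ω, y i ω)) (fun ω => (u i ω, v i ω)) P := by
      exact hindep.indepFun_prodMk_prodMk hfmeas (.inl (.inl i)) (.inl (.inr i))
        (.inr (.inl i)) (.inr (.inr i)) (by simp) (by simp) (by simp) (by simp)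
    set φ : ℝ × ℝ → ℝ := fun p => Real.sqrt (p.1 ^ 2 + p.2 ^ 2) ^ k with hφ
    have hφm : Measurable φ :=
      ((measurable_fst.pow_const 2).add (measurable_snd.pow_const 2)).sqrt.pow_const k
    have hrs : IndepFun (fun ω => Real.sqrt (x i ω ^ 2 + y i ω ^ 2) ^ k)
        (fun ω => Real.sqrt (u i ω ^ 2 + v i ω ^ 2) ^ k) P := hpair.comp hφm hφm
    have hfun : (fun ω => a i ω ^ k) = fun ω => Real.sqrt (x i ω ^ 2 + y i ω ^ 2) ^ k *
        Real.sqrt (u i ω ^ 2 + v i ω ^ 2) ^ k := by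
      funext ω; rw [haa]; ring
    constructor
    · rw [hfun]
      exact hrs.integrable_mul hxy.1 huv.1
    · rw [hfun, hrs.integral_fun_mul_eq_mul_integral ((((hxm i).pow_const 2).add
        ((hym i).pow_const 2)).sqrt.pow_const k).aestronglyMeasurable
        ((((hum i).pow_const 2).add ((hvm i).pow_const 2)).sqrt.pow_const k).aestronglyMeasurable,
        hxy.2, huv.2]
      ring
  -- independence of a j from a partial sum
  have hIndepSum : ∀ (s : Finset (Fin M)) (j : Fin M), j ∉ s →
      IndepFun (a j) (fun ω => ∑ i ∈ s, a i ω) P := by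
    intro s j hj
    set T : Fin M → Finset ((Fin M ⊕ Fin M) ⊕ (Fin M ⊕ Fin M)) := fun i =>
      {.inl (.inl i), .inl (.inr i), .inr (.inl i), .inr (.inr i)} with hT
    have hdisj : Disjoint (T j) (s.biUnion T) := by
      rw [Finset.disjoint_left]
      intro t htj htb
      obtain ⟨i, hi, hti⟩ := Finset.mem_biUnion.1 htb
      simp only [hT, Finset.mem_insert, Finset.mem_singleton] at htj hti
      rcases htj with h1|h1|h1|h1 <;> rcases hti with h2|h2|h2|h2 <;> simp_all
    have base := hindep.indepFun_finset (T j) (s.biUnion T) hdisj hfmeas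
    set G : ({t // t ∈ T j} → ℝ) → ℝ := fun vv =>
      Real.sqrt (vv ⟨.inl (.inl j), by simp [hT]⟩ ^ 2 + vv ⟨.inl (.inr j), by simp [hT]⟩ ^ 2) *
        Real.sqrt (vv ⟨.inr (.inl j), by simp [hT]⟩ ^ 2 + vv ⟨.inr (.inr j), by simp [hT]⟩ ^ 2)
      with hG
    have hGm : Measurable G := by
      apply Measurable.mul <;> apply Measurable.sqrt <;> apply Measurable.add <;>
        exact (measurable_pi_apply _).pow_const 2
    have hmem : ∀ (i : Fin M), i ∈ s → ∀ t ∈ T i, t ∈ s.biUnion T := by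
      intro i hi t ht
      exact Finset.mem_biUnion.2 ⟨i, hi, ht⟩
    set H : ({t // t ∈ s.biUnion T} → ℝ) → ℝ := fun vv =>
      ∑ i ∈ s.attach,
        Real.sqrt (vv ⟨.inl (.inl i.1), hmem i.1 i.2 _ (by simp [hT])⟩ ^ 2 +
            vv ⟨.inl (.inr i.1), hmem i.1 i.2 _ (by simp [hT])⟩ ^ 2) *
        Real.sqrt (vv ⟨.inr (.inl i.1), hmem i.1 i.2 _ (by simp [hT])⟩ ^ 2 +
            vv ⟨.inr (.inr i.1), hmem i.1 i.2 _ (by simp [hT])⟩ ^ 2) with hH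
    have hHm : Measurable H := by
      apply Finset.measurable_sum
      intro i _
      apply Measurable.mul <;> apply Measurable.sqrt <;> apply Measurable.add <;>
        exact (measurable_pi_apply _).pow_const 2
    have key := base.comp hGm hHm
    have e1 : (G ∘ fun ω (t : {t // t ∈ T j}) => f t ω)
        = a j := by
      funext ω
      simp only [Function.comp_apply, hG, haa, hf, Sum.elim_inl, Sum.elim_inr]
    have e2 : (H ∘ fun ω (t : {t // t ∈ s.biUnion T}) =>
        f t ω) = fun ω => ∑ i ∈ s, a i ω := by
      funext ω
      simp only [Function.comp_apply, hH, haa, hf, Sum.elim_inl, Sum.elim_inr]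
      exact Finset.sum_attach s fun i => Real.sqrt (x i ω ^ 2 + y i ω ^ 2) *
        Real.sqrt (u i ω ^ 2 + v i ω ^ 2)
    rwa [e1, e2] at key
  -- moment values
  have hE1 : ∀ i : Fin M, ∫ ω, a i ω ^ 1 ∂P = Real.pi / 4 := by
    intro i
    rw [(mom i 1).2, show (((1:ℕ):ℝ) + 2)/2 = 3/2 by norm_num, gamma32, div_pow,
      Real.sq_sqrt Real.pi_nonneg]
    norm_num
  have hE2 : ∀ i : Fin M, ∫ ω, a i ω ^ 2 ∂P = 1 := by
    intro i
    rw [(mom i 2).2, show (((2:ℕ):ℝ) + 2)/2 = 2 by norm_num, Real.Gamma_two]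
    norm_num
  have hE3 : ∀ i : Fin M, ∫ ω, a i ω ^ 3 ∂P = 9 * Real.pi / 16 := by
    intro i
    rw [(mom i 3).2, show (((3:ℕ):ℝ) + 2)/2 = 5/2 by norm_num, gamma52, div_pow, mul_pow,
      Real.sq_sqrt Real.pi_nonneg]
    norm_num
  have hE4 : ∀ i : Fin M, ∫ ω, a i ω ^ 4 ∂P = 4 := by
    intro i
    rw [(mom i 4).2, show (((4:ℕ):ℝ) + 2)/2 = 3 by norm_num, gamma3]
    norm_num
  -- induction over finsets
  have key : ∀ s : Finset (Fin M),
      (∀ k, k ≤ 4 → Integrable (fun ω => (∑ i ∈ s, a i ω) ^ k) P) ∧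
      (∫ ω, (∑ i ∈ s, a i ω) ^ 1 ∂P = (s.card : ℝ) * (Real.pi/4)) ∧
      (∫ ω, (∑ i ∈ s, a i ω) ^ 2 ∂P = (s.card : ℝ)
        + (s.card : ℝ)*((s.card : ℝ)-1)*(Real.pi/4)^2) ∧
      (∫ ω, (∑ i ∈ s, a i ω) ^ 3 ∂P = (s.card : ℝ)*(9*Real.pi/16)
        + 3*(s.card : ℝ)*((s.card : ℝ)-1)*(Real.pi/4)
        + (s.card : ℝ)*((s.card : ℝ)-1)*((s.card : ℝ)-2)*(Real.pi/4)^3) ∧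
      (∫ ω, (∑ i ∈ s, a i ω) ^ 4 ∂P = (s.card : ℝ)*4
        + 4*(s.card : ℝ)*((s.card : ℝ)-1)*(9*Real.pi/16)*(Real.pi/4)
        + 3*(s.card : ℝ)*((s.card : ℝ)-1)
        + 6*(s.card : ℝ)*((s.card : ℝ)-1)*((s.card : ℝ)-2)*(Real.pi/4)^2
        + (s.card : ℝ)*((s.card : ℝ)-1)*((s.card : ℝ)-2)*((s.card : ℝ)-3)*(Real.pi/4)^4) := by
    intro s
    induction s using Finset.induction_on with
    | empty =>
      refine ⟨fun k hk => ?_, ?_, ?_, ?_, ?_⟩ <;>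
        simp only [Finset.sum_empty, Finset.card_empty] <;> norm_num
    | @insert j s hj ih =>
      obtain ⟨ihInt, ih1, ih2, ih3, ih4⟩ := ih
      set S : Ω → ℝ := fun ω => ∑ i ∈ s, a i ω with hS
      have hSm : Measurable S := Finset.measurable_sum _ (fun i _ => ham i)
      have hind := hIndepSum s j hj
      have hml : ∀ m l : ℕ, IndepFun (fun ω => a j ω ^ m) (fun ω => S ω ^ l) P := fun m l =>
        hind.comp (measurable_id.pow_const m) (measurable_id.pow_const l)
      have hInt_ml : ∀ m l : ℕ, l ≤ 4 → Integrable (fun ω => a j ω ^ m * S ω ^ l) P :=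
        fun m l hl => (hml m l).integrable_mul (mom j m).1 (ihInt l hl)
      have hval : ∀ m l : ℕ, ∫ ω, a j ω ^ m * S ω ^ l ∂P
          = (∫ ω, a j ω ^ m ∂P) * ∫ ω, S ω ^ l ∂P := fun m l =>
        (hml m l).integral_fun_mul_eq_mul_integral ((ham j).pow_const m).aestronglyMeasurable
          (hSm.pow_const l).aestronglyMeasurable
      have hsum_ins : ∀ ω, ∑ i ∈ insert j s, a i ω = a j ω + S ω := fun ω =>
        Finset.sum_insert hj
      have hA0 : ∫ ω, a j ω ^ 0 ∂P = 1 := by simp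
      have hS0 : ∫ ω, S ω ^ 0 ∂P = 1 := by simp
      have hcard : (insert j s).card = s.card + 1 := Finset.card_insert_of_notMem hj
      refine ⟨?_, ?_, ?_, ?_, ?_⟩
      · intro k hk
        interval_cases k
        · simpa using integrable_const (1 : ℝ)
        · have e : (fun ω => (∑ i ∈ insert j s, a i ω) ^ 1)
              = fun ω => a j ω^1 * S ω^0 + a j ω^0 * S ω^1 :=
            funext fun ω => by rw [hsum_ins ω]; ring
          rw [e]
          exact (hInt_ml 1 0 (by norm_num)).add (hInt_ml 0 1 (by norm_num))
        · have e : (fun ω => (∑ i ∈ insert j s, a i ω) ^ 2)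
              = fun ω => a j ω^2 * S ω^0 + 2*(a j ω^1 * S ω^1) + a j ω^0 * S ω^2 :=
            funext fun ω => by rw [hsum_ins ω]; ring
          rw [e]
          exact ((hInt_ml 2 0 (by norm_num)).add
            ((hInt_ml 1 1 (by norm_num)).const_mul 2)).add (hInt_ml 0 2 (by norm_num))
        · have e : (fun ω => (∑ i ∈ insert j s, a i ω) ^ 3)
              = fun ω => a j ω^3 * S ω^0 + 3*(a j ω^2 * S ω^1) + 3*(a j ω^1 * S ω^2)
                + a j ω^0 * S ω^3 :=
            funext fun ω => by rw [hsum_ins ω]; ring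
          rw [e]
          exact (((hInt_ml 3 0 (by norm_num)).add
            ((hInt_ml 2 1 (by norm_num)).const_mul 3)).add
            ((hInt_ml 1 2 (by norm_num)).const_mul 3)).add (hInt_ml 0 3 (by norm_num))
        · have e : (fun ω => (∑ i ∈ insert j s, a i ω) ^ 4)
              = fun ω => a j ω^4 * S ω^0 + 4*(a j ω^3 * S ω^1) + 6*(a j ω^2 * S ω^2)
                + 4*(a j ω^1 * S ω^3) + a j ω^0 * S ω^4 :=
            funext fun ω => by rw [hsum_ins ω]; ring
          rw [e]
          exact ((((hInt_ml 4 0 (by norm_num)).add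
            ((hInt_ml 3 1 (by norm_num)).const_mul 4)).add
            ((hInt_ml 2 2 (by norm_num)).const_mul 6)).add
            ((hInt_ml 1 3 (by norm_num)).const_mul 4)).add (hInt_ml 0 4 (by norm_num))
      · calc ∫ ω, (∑ i ∈ insert j s, a i ω) ^ 1 ∂P
            = ∫ ω, (a j ω^1 * S ω^0 + a j ω^0 * S ω^1) ∂P := by
              congr 1; funext ω; rw [hsum_ins ω]; ring
          _ = _ := by
              have i10 : Integrable (fun ω => a j ω^1 * S ω^0) P := hInt_ml 1 0 (by norm_num)
              have i01 : Integrable (fun ω => a j ω^0 * S ω^1) P := hInt_ml 0 1 (by norm_num)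
              rw [integral_add i10 i01]
              rw [hval 1 0, hval 0 1, hA0, hS0, hE1 j, ih1, hcard]
              push_cast
              ring
      · calc ∫ ω, (∑ i ∈ insert j s, a i ω) ^ 2 ∂P
            = ∫ ω, (a j ω^2 * S ω^0 + 2*(a j ω^1 * S ω^1) + a j ω^0 * S ω^2) ∂P := by
              congr 1; funext ω; rw [hsum_ins ω]; ring
          _ = _ := by
              have i20 : Integrable (fun ω => a j ω^2 * S ω^0) P := hInt_ml 2 0 (by norm_num)
              have i11 : Integrable (fun ω => 2*(a j ω^1 * S ω^1)) P := by
                exact (hInt_ml 1 1 (by norm_num)).const_mul 2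
              have i02 : Integrable (fun ω => a j ω^0 * S ω^2) P := hInt_ml 0 2 (by norm_num)
              have J1 : Integrable (fun ω => a j ω^2 * S ω^0 + 2*(a j ω^1 * S ω^1)) P := by
                exact i20.add i11
              rw [integral_add J1 i02,
                integral_add i20 i11]
              rw [integral_const_mul]
              rw [hval 2 0, hval 1 1, hval 0 2, hA0, hS0, hE1 j, hE2 j, ih1, ih2, hcard]
              push_cast
              ring
      · calc ∫ ω, (∑ i ∈ insert j s, a i ω) ^ 3 ∂P
            = ∫ ω, (a j ω^3 * S ω^0 + 3*(a j ω^2 * S ω^1) + 3*(a j ω^1 * S ω^2) + a j ω^0 * S ω^3) ∂P := by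
              congr 1; funext ω; rw [hsum_ins ω]; ring
          _ = _ := by
              have i30 : Integrable (fun ω => a j ω^3 * S ω^0) P := hInt_ml 3 0 (by norm_num)
              have i21 : Integrable (fun ω => 3*(a j ω^2 * S ω^1)) P := by
                exact (hInt_ml 2 1 (by norm_num)).const_mul 3
              have i12 : Integrable (fun ω => 3*(a j ω^1 * S ω^2)) P := by
                exact (hInt_ml 1 2 (by norm_num)).const_mul 3
              have i03 : Integrable (fun ω => a j ω^0 * S ω^3) P := hInt_ml 0 3 (by norm_num)
              have J1 : Integrable (fun ω => a j ω^3 * S ω^0 + 3*(a j ω^2 * S ω^1)) P := by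
                exact i30.add i21
              have J2 : Integrable (fun ω => a j ω^3 * S ω^0 + 3*(a j ω^2 * S ω^1) + 3*(a j ω^1 * S ω^2)) P := by
                exact J1.add i12
              rw [integral_add J2 i03,
                integral_add J1 i12,
                integral_add i30 i21]
              rw [integral_const_mul, integral_const_mul]
              rw [hval 3 0, hval 2 1, hval 1 2, hval 0 3, hA0, hS0, hE1 j, hE2 j, hE3 j, ih1, ih2, ih3, hcard]
              push_cast
              ring
      · calc ∫ ω, (∑ i ∈ insert j s, a i ω) ^ 4 ∂P
            = ∫ ω, (a j ω^4 * S ω^0 + 4*(a j ω^3 * S ω^1) + 6*(a j ω^2 * S ω^2) + 4*(a j ω^1 * S ω^3) + a j ω^0 * S ω^4) ∂P := by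
              congr 1; funext ω; rw [hsum_ins ω]; ring
          _ = _ := by
              have i40 : Integrable (fun ω => a j ω^4 * S ω^0) P := hInt_ml 4 0 (by norm_num)
              have i31 : Integrable (fun ω => 4*(a j ω^3 * S ω^1)) P := by
                exact (hInt_ml 3 1 (by norm_num)).const_mul 4
              have i22 : Integrable (fun ω => 6*(a j ω^2 * S ω^2)) P := by
                exact (hInt_ml 2 2 (by norm_num)).const_mul 6
              have i13 : Integrable (fun ω => 4*(a j ω^1 * S ω^3)) P := by
                exact (hInt_ml 1 3 (by norm_num)).const_mul 4
              have i04 : Integrable (fun ω => a j ω^0 * S ω^4) P := hInt_ml 0 4 (by norm_num)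
              have J1 : Integrable (fun ω => a j ω^4 * S ω^0 + 4*(a j ω^3 * S ω^1)) P := by
                exact i40.add i31
              have J2 : Integrable (fun ω => a j ω^4 * S ω^0 + 4*(a j ω^3 * S ω^1) + 6*(a j ω^2 * S ω^2)) P := by
                exact J1.add i22
              have J3 : Integrable (fun ω => a j ω^4 * S ω^0 + 4*(a j ω^3 * S ω^1) + 6*(a j ω^2 * S ω^2) + 4*(a j ω^1 * S ω^3)) P := by
                exact J2.add i13
              rw [integral_add J3 i04,
                integral_add J2 i13,
                integral_add J1 i22,
                integral_add i40 i31]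
              rw [integral_const_mul, integral_const_mul, integral_const_mul]
              rw [hval 4 0, hval 3 1, hval 2 2, hval 1 3, hval 0 4, hA0, hS0, hE1 j, hE2 j, hE3 j, hE4 j, ih1, ih2, ih3, ih4, hcard]
              push_cast
              ring
  -- assemble
  have habs : ∀ ω, (∑ i, ‖h i ω‖ * ‖g i ω‖) = ∑ i, a i ω := by
    intro ω
    refine Finset.sum_congr rfl fun i _ => ?_
    rw [hhdef, hgdef, abs_helper, abs_helper]
  have hgoal : ∫ ω, (∑ i, ‖h i ω‖ * ‖g i ω‖) ^ 4 ∂P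
      = ∫ ω, (∑ i, a i ω) ^ 4 ∂P := by
    congr 1; funext ω; rw [habs ω]
  have h4 := (key Finset.univ).2.2.2.2
  rw [Finset.card_univ, Fintype.card_fin] at h4
  rw [hgoal, h4]
  obtain ⟨hc2, hc3, hc4⟩ := desc_choose M
  linear_combination (-(3*(3*Real.pi^2/16+1))) * hc2 + (-(3*Real.pi^2/8)) * hc3
    + (-(Real.pi^4/256)) * hc4
end

section
/- (Proposition 2: outage probability in the fully correlated case with random phase shifts.) Let X, Y, ψ be mutually independent real random variables, where X and Y have the exponential distribution of rate 1 and ψ has the exponential distribution of rate 1/M (mean M), for a positive integer M. Then for every ξ > 0, 𝓟(ψ·X·Y < ξ) = 1 − (1/M)·∫₀^∞ e^{−s/M} (∫₀^∞ e^{−t − ξ/(s·t)} dt) ds (equivalently 1 − (2/M)·∫₀^∞ √(ξ/s)·e^{−s/M}·K₁(2√(ξ/s)) ds, where K₁ is the modified Bessel function of the second kind of order 1, using ∫₀^∞ e^{−t − w/t} dt = 2√w·K₁(2√w)). -/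
open MeasureTheory ProbabilityTheory Real Set
open scoped ENNReal

set_option maxHeartbeats 1000000

namespace Stmt18Aux

lemma expMeasure_eq_lintegral {r : ℝ} {s : Set ℝ} (hs : MeasurableSet s) :
    expMeasure r s = ∫⁻ x in s, exponentialPDF r x := by
  rw [expMeasure, gammaMeasure, withDensity_apply _ hs]; rfl

lemma measurable_expPDF (r : ℝ) : Measurable (exponentialPDF r) :=
  (measurable_exponentialPDFReal r).ennreal_ofReal

lemma expMeasure_Iio {r c : ℝ} (hr : 0 < r) (hc : 0 ≤ c) :
    expMeasure r (Iio c) = ENNReal.ofReal (1 - Real.exp (-(r * c))) := by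
  rw [expMeasure_eq_lintegral measurableSet_Iio, Measure.restrict_congr_set Iio_ae_eq_Iic,
    lintegral_exponentialPDF_eq_antiDeriv hr, if_pos hc]

lemma expMeasure_Iic_zero {r : ℝ} (hr : 0 < r) : expMeasure r (Iic 0) = 0 := by
  rw [expMeasure_eq_lintegral measurableSet_Iic,
    lintegral_exponentialPDF_eq_antiDeriv hr, if_pos le_rfl]
  simp

lemma ae_pos {r : ℝ} (hr : 0 < r) : ∀ᵐ x ∂(expMeasure r), 0 < x := by
  rw [ae_iff]
  have : {x : ℝ | ¬ 0 < x} = Iic 0 := by ext x; simp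
  rw [this, expMeasure_Iic_zero hr]

lemma lintegral_expMeasure {r : ℝ} {g : ℝ → ℝ≥0∞} (hg : Measurable g) :
    ∫⁻ x, g x ∂(expMeasure r) = ∫⁻ x in Ioi 0, ENNReal.ofReal (r * Real.exp (-(r * x))) * g x := by
  rw [expMeasure, gammaMeasure]
  rw [show gammaPDF 1 r = exponentialPDF r from rfl]
  rw [lintegral_withDensity_eq_lintegral_mul _ (measurable_expPDF r) hg]
  rw [← lintegral_add_compl (fun x => (exponentialPDF r * g) x) (measurableSet_Ioi (a := (0:ℝ)))]
  have h2 : ∫⁻ x in (Ioi (0:ℝ))ᶜ, (exponentialPDF r * g) x = 0 := by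
    rw [compl_Ioi, Measure.restrict_congr_set Iio_ae_eq_Iic.symm]
    calc ∫⁻ x in Iio (0:ℝ), (exponentialPDF r * g) x
        = ∫⁻ _ in Iio (0:ℝ), (0:ℝ≥0∞) :=
          setLIntegral_congr_fun_ae measurableSet_Iio (ae_of_all _ fun x hx => by
            simp [Pi.mul_apply, exponentialPDF_of_neg hx])
      _ = 0 := by simp
  rw [h2, add_zero]
  refine setLIntegral_congr_fun_ae measurableSet_Ioi (ae_of_all _ (fun x hx => ?_))
  simp [Pi.mul_apply, exponentialPDF_of_nonneg (le_of_lt hx)]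

lemma sub_lintegral {α : Type*} {m : MeasurableSpace α} (μ : Measure α) [IsProbabilityMeasure μ]
    {K : α → ℝ≥0∞} (hK : Measurable K) (hle : ∀ᵐ a ∂μ, K a ≤ 1) :
    ∫⁻ a, (1 - K a) ∂μ = 1 - ∫⁻ a, K a ∂μ := by
  have hle1 : ∫⁻ a, K a ∂μ ≤ 1 := by
    refine le_trans (lintegral_mono_ae hle) ?_
    simp
  have hne : ∫⁻ a, K a ∂μ ≠ ⊤ := (lt_of_le_of_lt hle1 ENNReal.one_lt_top).ne
  calc ∫⁻ a, (1 - K a) ∂μ = ∫⁻ a, (fun _ => (1:ℝ≥0∞)) a - K a ∂μ := rfl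
    _ = ∫⁻ _, (1:ℝ≥0∞) ∂μ - ∫⁻ a, K a ∂μ := lintegral_sub hK hne hle
    _ = 1 - ∫⁻ a, K a ∂μ := by simp

lemma key {r : ℝ} (hr : 0 < r) {ξ : ℝ} (hξ : 0 < ξ) :
    ((expMeasure r).prod ((expMeasure 1).prod (expMeasure 1)))
        {p : ℝ × ℝ × ℝ | p.1 * p.2.1 * p.2.2 < ξ}
      = ENNReal.ofReal (1 - ∫ s in Ioi (0:ℝ),
          r * Real.exp (-(r * s)) * ∫ t in Ioi (0:ℝ), Real.exp (-t - ξ / (s * t))) := by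
  haveI : IsProbabilityMeasure (expMeasure (1:ℝ)) := isProbabilityMeasure_expMeasure one_pos
  haveI : IsProbabilityMeasure (expMeasure r) := isProbabilityMeasure_expMeasure hr
  set μ := expMeasure (1:ℝ) with hμdef
  set ν := expMeasure r with hνdef
  set S : Set (ℝ × ℝ × ℝ) := {p | p.1 * p.2.1 * p.2.2 < ξ} with hSdef
  have hS : MeasurableSet S :=
    measurableSet_lt ((measurable_fst.mul (measurable_fst.comp measurable_snd)).mul
      (measurable_snd.comp measurable_snd)) measurable_const
  have hmeas_e : Measurable (fun p : ℝ × ℝ => ENNReal.ofReal (Real.exp (-(ξ / (p.1 * p.2))))) :=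
    ((measurable_const.div (measurable_fst.mul measurable_snd)).neg.exp).ennreal_ofReal
  set K : ℝ → ℝ≥0∞ := fun s => ∫⁻ x, ENNReal.ofReal (Real.exp (-(ξ / (s * x)))) ∂μ with hKdef
  have hKmeas : Measurable K := Measurable.lintegral_prod_right' hmeas_e
  have hKle : ∀ s : ℝ, 0 < s → K s ≤ 1 := by
    intro s hs
    have h1 : K s ≤ ∫⁻ _, (1:ℝ≥0∞) ∂μ := by
      refine lintegral_mono_ae ?_
      filter_upwards [ae_pos one_pos] with x hx
      rw [ENNReal.ofReal_le_one]
      rw [Real.exp_le_one_iff]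
      have : 0 ≤ ξ / (s * x) := by positivity
      linarith
    simpa using h1
  -- inner computation
  have hinner : ∀ s : ℝ, 0 < s → (μ.prod μ) (Prod.mk s ⁻¹' S) = 1 - K s := by
    intro s hs
    have hxmeas : Measurable (fun x : ℝ => ENNReal.ofReal (Real.exp (-(ξ / (s * x))))) :=
      ((measurable_const.div (measurable_const.mul measurable_id)).neg.exp).ennreal_ofReal
    rw [Measure.prod_apply (hS.preimage measurable_prodMk_left)]
    have hpt : ∀ᵐ x ∂μ, μ (Prod.mk x ⁻¹' (Prod.mk s ⁻¹' S))
        = 1 - ENNReal.ofReal (Real.exp (-(ξ / (s * x)))) := by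
      filter_upwards [ae_pos one_pos] with x hx
      have hsx : 0 < s * x := mul_pos hs hx
      have hset : (Prod.mk x ⁻¹' (Prod.mk s ⁻¹' S)) = Iio (ξ / (s * x)) := by
        ext y
        simp only [mem_preimage, hSdef, mem_setOf_eq, mem_Iio]
        rw [lt_div_iff₀ hsx]
        constructor <;> intro h <;> nlinarith
      rw [hset, hμdef, expMeasure_Iio one_pos (by positivity), one_mul,
        ENNReal.ofReal_sub 1 (Real.exp_nonneg _), ENNReal.ofReal_one]
    rw [lintegral_congr_ae hpt]
    rw [sub_lintegral μ hxmeas]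
    filter_upwards [ae_pos one_pos] with x hx
    rw [ENNReal.ofReal_le_one, Real.exp_le_one_iff]
    have : 0 ≤ ξ / (s * x) := by positivity
    linarith
  have step2 : (ν.prod (μ.prod μ)) S = 1 - ∫⁻ s, K s ∂ν := by
    rw [Measure.prod_apply hS]
    rw [lintegral_congr_ae (g := fun s => 1 - K s) ?_]
    · exact sub_lintegral ν hKmeas (by filter_upwards [ae_pos hr] with s hs using hKle s hs)
    · filter_upwards [ae_pos hr] with s hs using hinner s hs
  -- real-valued inner integral
  set g : ℝ → ℝ := fun s => ∫ t in Ioi (0:ℝ), Real.exp (-t - ξ / (s * t)) with hgdef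
  have hfmeas : Measurable (fun p : ℝ × ℝ => Real.exp (-p.2 - ξ / (p.1 * p.2))) :=
    (measurable_snd.neg.sub (measurable_const.div (measurable_fst.mul measurable_snd))).exp
  have hgSM : StronglyMeasurable g :=
    hfmeas.stronglyMeasurable.integral_prod_right'
  have hdom : IntegrableOn (fun t : ℝ => Real.exp (-1 * t)) (Ioi 0) :=
    exp_neg_integrableOn_Ioi 0 one_pos
  have hginteg : ∀ s : ℝ, 0 < s → IntegrableOn (fun t => Real.exp (-t - ξ / (s * t))) (Ioi 0) := by
    intro s hs
    refine Integrable.mono hdom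
      (((measurable_id.neg.sub (measurable_const.div
        (measurable_const.mul measurable_id))).exp).aestronglyMeasurable) ?_
    rw [ae_restrict_iff' measurableSet_Ioi]
    refine ae_of_all _ fun t ht => ?_
    have ht' := mem_Ioi.mp ht
    have h0 : 0 ≤ ξ / (s * t) := by positivity
    rw [Real.norm_eq_abs, Real.norm_eq_abs, abs_of_nonneg (Real.exp_nonneg _),
      abs_of_nonneg (Real.exp_nonneg _), Real.exp_le_exp]
    linarith
  have hgnonneg : ∀ s : ℝ, 0 ≤ g s := fun s =>
    integral_nonneg fun t => Real.exp_nonneg _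
  have hgle : ∀ s : ℝ, 0 < s → g s ≤ 1 := by
    intro s hs
    have h1 : ∫ t in Ioi (0:ℝ), Real.exp (-t) = 1 := by
      simpa using integral_exp_neg_Ioi 0
    rw [← h1]
    refine setIntegral_mono_on (hginteg s hs) (by simpa using hdom) measurableSet_Ioi
      fun t ht => ?_
    have h0 : 0 ≤ ξ / (s * t) := by
      have := mem_Ioi.mp ht; positivity
    rw [Real.exp_le_exp]; linarith
  have hK_eq : ∀ s : ℝ, 0 < s → K s = ENNReal.ofReal (g s) := by
    intro s hs
    rw [hKdef]
    simp only []
    rw [hμdef, lintegral_expMeasure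
      (g := fun x => ENNReal.ofReal (Real.exp (-(ξ / (s * x)))))
      (((measurable_const.div (measurable_const.mul measurable_id)).neg.exp).ennreal_ofReal)]
    rw [hgdef]
    simp only []
    rw [ofReal_integral_eq_lintegral_ofReal (hginteg s hs)
      (ae_of_all _ fun t => Real.exp_nonneg _)]
    refine setLIntegral_congr_fun_ae measurableSet_Ioi (ae_of_all _ fun x hx => ?_)
    rw [← ENNReal.ofReal_mul (by positivity)]
    congr 1
    rw [one_mul, ← Real.exp_add]
    ring_nf
  have hbigInt : IntegrableOn (fun s => r * Real.exp (-(r * s)) * g s) (Ioi 0) := by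
    have hdom' : IntegrableOn (fun s : ℝ => r * Real.exp (-r * s)) (Ioi 0) :=
      (exp_neg_integrableOn_Ioi 0 hr).const_mul r
    refine Integrable.mono hdom' ?_ ?_
    · exact ((measurable_const.mul ((measurable_id.const_mul r).neg.exp)).stronglyMeasurable.mul
        hgSM).aestronglyMeasurable
    · rw [ae_restrict_iff' measurableSet_Ioi]
      refine ae_of_all _ fun s hs => ?_
      have hs' := mem_Ioi.mp hs
      rw [Real.norm_eq_abs, Real.norm_eq_abs, abs_of_nonneg (by positivity),
        abs_of_nonneg (by positivity : (0:ℝ) ≤ r * Real.exp (-r * s))]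
      calc r * Real.exp (-(r * s)) * g s ≤ r * Real.exp (-(r * s)) * 1 := by
            refine mul_le_mul_of_nonneg_left (hgle s hs') (by positivity)
        _ = r * Real.exp (-r * s) := by rw [mul_one, neg_mul]
  have hbig : ∫⁻ s, K s ∂ν = ENNReal.ofReal (∫ s in Ioi (0:ℝ), r * Real.exp (-(r * s)) * g s) := by
    rw [hνdef, lintegral_expMeasure hKmeas]
    rw [ofReal_integral_eq_lintegral_ofReal hbigInt
      (ae_of_all _ fun s => mul_nonneg (by positivity) (hgnonneg s))]
    refine setLIntegral_congr_fun_ae measurableSet_Ioi (ae_of_all _ fun s hs => ?_)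
    rw [hK_eq s hs, ← ENNReal.ofReal_mul (by positivity)]
  rw [step2, hbig, ENNReal.ofReal_sub 1
    (integral_nonneg fun s => mul_nonneg (by positivity) (hgnonneg s)), ENNReal.ofReal_one]

end Stmt18Aux


open MeasureTheory ProbabilityTheory

theorem stmt18 {Ω : Type*} [MeasurableSpace Ω] (P : Measure Ω) [IsProbabilityMeasure P]
    {M : ℕ} (hM : 0 < M)
    (X Y ψ : Ω → ℝ) (hX : Measurable X) (hY : Measurable Y) (hψ : Measurable ψ)
    (hindep : iIndepFun ![X, Y, ψ] P)
    (hXlaw : Measure.map X P = expMeasure 1)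
    (hYlaw : Measure.map Y P = expMeasure 1)
    (hψlaw : Measure.map ψ P = expMeasure (1 / (M : ℝ))) :
    ∀ ξ : ℝ, 0 < ξ →
      P {ω | ψ ω * X ω * Y ω < ξ}
        = ENNReal.ofReal
            (1 - (1 / (M : ℝ)) *
              ∫ s in Set.Ioi (0:ℝ), Real.exp (-s / M) *
                ∫ t in Set.Ioi (0:ℝ), Real.exp (-t - ξ / (s * t))) := by
  intro ξ hξ
  have hMpos : (0:ℝ) < (M : ℝ) := Nat.cast_pos.mpr hM
  have hr : (0:ℝ) < 1 / (M : ℝ) := by positivity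
  have hmeas3 : ∀ i, Measurable (![X, Y, ψ] i) := by
    intro i; fin_cases i <;> [exact hX; exact hY; exact hψ]
  have hIxy : IndepFun X Y P := hindep.indepFun (show (0 : Fin 3) ≠ 1 by decide)
  have hpair : IndepFun ψ (fun ω => (X ω, Y ω)) P :=
    (hindep.indepFun_prodMk hmeas3 0 1 2 (by decide) (by decide)).symm
  have hmapXY : Measure.map (fun ω => (X ω, Y ω)) P = (expMeasure 1).prod (expMeasure 1) := by
    rw [(indepFun_iff_map_prod_eq_prod_map_map hX.aemeasurable hY.aemeasurable).mp hIxy,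
      hXlaw, hYlaw]
  have hmapT : Measure.map (fun ω => (ψ ω, (X ω, Y ω))) P
      = (expMeasure (1 / (M : ℝ))).prod ((expMeasure 1).prod (expMeasure 1)) := by
    rw [(indepFun_iff_map_prod_eq_prod_map_map hψ.aemeasurable
      (hX.prodMk hY).aemeasurable).mp hpair, hψlaw, hmapXY]
  have hS : MeasurableSet {p : ℝ × ℝ × ℝ | p.1 * p.2.1 * p.2.2 < ξ} :=
    measurableSet_lt ((measurable_fst.mul (measurable_fst.comp measurable_snd)).mul
      (measurable_snd.comp measurable_snd)) measurable_const
  have hPT : P {ω | ψ ω * X ω * Y ω < ξ}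
      = ((expMeasure (1 / (M : ℝ))).prod ((expMeasure 1).prod (expMeasure 1)))
          {p : ℝ × ℝ × ℝ | p.1 * p.2.1 * p.2.2 < ξ} := by
    rw [← hmapT, Measure.map_apply (hψ.prodMk (hX.prodMk hY)) hS]
    rfl
  rw [hPT, Stmt18Aux.key hr hξ]
  congr 1
  have harg : ∀ s : ℝ, (1 / (M:ℝ)) * Real.exp (-(1 / (M:ℝ) * s)) *
        (∫ t in Set.Ioi (0:ℝ), Real.exp (-t - ξ / (s * t)))
      = (1 / (M:ℝ)) * (Real.exp (-s / M) *
        (∫ t in Set.Ioi (0:ℝ), Real.exp (-t - ξ / (s * t)))) := by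
    intro s
    rw [show (-(1 / (M:ℝ) * s)) = -s / M by ring, mul_assoc]
  rw [show (fun s => (1 / (M:ℝ)) * Real.exp (-(1 / (M:ℝ) * s)) *
        (∫ t in Set.Ioi (0:ℝ), Real.exp (-t - ξ / (s * t)))) = fun s => (1 / (M:ℝ)) *
        (Real.exp (-s / M) * (∫ t in Set.Ioi (0:ℝ), Real.exp (-t - ξ / (s * t))))
      from funext harg]
  rw [MeasureTheory.integral_const_mul]
end
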